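/- For s ≥ 0 let P_s(X) = ∏_{i=1}^{2^s} (X − (2 + 2·cos((2i−1)π/2^{s+1}))), a monic real polynomial of degree 2^s. Then for every integer j with 1 ≤ j ≤ 2^s, P_s'(2 + 2·cos((2j−1)π/2^{s+1})) = (−1)^{j+1}·2^s / sin((2j−1)π/2^{s+1}), where P_s' is the derivative of P_s. -/

import Mathlib

open Real

lemma prod_eval_aux (s : ℕ) (θ : ℝ) :
    ∏ i ∈ Finset.range (2 ^ s),
      (2 + 2 * Real.cos θ - (2 + 2 * Real.cos ((2 * (i : ℝ) + 1) * π / 2 ^ (s + 1)))) =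
      2 * Real.cos (2 ^ s * θ) := by
  induction s generalizing θ with
  | zero =>
    simp [Real.cos_pi_div_two]
  | succ s ih =>
    have h2n : (2 : ℕ) ^ (s + 1) = 2 ^ s + 2 ^ s := by ring
    rw [h2n, Finset.prod_range_add]
    set g : ℕ → ℝ := fun k =>
      (2 + 2 * Real.cos θ - (2 + 2 * Real.cos ((2 * (k : ℝ) + 1) * π / 2 ^ (s + 1 + 1)))) with hg
    have hrefl : ∏ i ∈ Finset.range (2 ^ s), g (2 ^ s + i) =
        ∏ i ∈ Finset.range (2 ^ s), g (2 ^ s + (2 ^ s - 1 - i)) :=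
      (Finset.prod_range_reflect (fun i => g (2 ^ s + i)) (2 ^ s)).symm
    rw [hrefl, ← Finset.prod_mul_distrib]
    have key : ∀ i ∈ Finset.range (2 ^ s), g i * g (2 ^ s + (2 ^ s - 1 - i)) =
        (2 + 2 * Real.cos (2 * θ) - (2 + 2 * Real.cos ((2 * (i : ℝ) + 1) * π / 2 ^ (s + 1)))) := by
      intro i hi
      rw [Finset.mem_range] at hi
      have hi' : i + 1 ≤ 2 ^ s := hi
      have hcast : ((2 ^ s + (2 ^ s - 1 - i) : ℕ) : ℝ) = 2 ^ (s + 1) - 1 - i := by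
        have h1 : 2 ^ s - 1 - i = 2 ^ s - (i + 1) := by omega
        rw [h1]
        push_cast [Nat.cast_sub hi']
        ring
      rw [hg]
      simp only [hcast]
      set a : ℝ := (2 * (i : ℝ) + 1) * π / 2 ^ (s + 1 + 1) with ha
      have hb : (2 * ((2:ℝ) ^ (s + 1) - 1 - i) + 1) * π / 2 ^ (s + 1 + 1) = π - a := by
        rw [ha]
        field_simp
        ring
      have hc : (2 * (i : ℝ) + 1) * π / 2 ^ (s + 1) = 2 * a := by
        rw [ha]
        field_simp
        ring
      rw [hb, hc, Real.cos_pi_sub, Real.cos_two_mul a, Real.cos_two_mul θ]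
      ring
    rw [Finset.prod_congr rfl key, ih (2 * θ)]
    ring_nf

theorem derivative_of_Ps (s : ℕ)
    (P : Polynomial ℝ)
    (hP : P = ∏ i ∈ Finset.range (2 ^ s),
        (Polynomial.X - Polynomial.C (2 + 2 * Real.cos ((2 * (i : ℝ) + 1) * π / 2 ^ (s + 1)))))
    (j : ℕ) (hj1 : 1 ≤ j) (hj2 : j ≤ 2 ^ s) :
    P.derivative.eval (2 + 2 * Real.cos ((2 * (j : ℝ) - 1) * π / 2 ^ (s + 1))) =
      (-1) ^ (j + 1) * 2 ^ s / Real.sin ((2 * (j : ℝ) - 1) * π / 2 ^ (s + 1)) := by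
  set t : ℝ := (2 * (j : ℝ) - 1) * π / 2 ^ (s + 1) with ht
  set r : ℝ := 2 + 2 * Real.cos t with hr
  -- pointwise identity
  have hfun : ∀ θ : ℝ, P.eval (2 + 2 * Real.cos θ) = 2 * Real.cos (2 ^ s * θ) := by
    intro θ
    rw [hP, Polynomial.eval_prod]
    simp only [Polynomial.eval_sub, Polynomial.eval_X, Polynomial.eval_C]
    exact prod_eval_aux s θ
  -- derivative of θ ↦ P.eval (2 + 2 cos θ) at t
  have h1 : HasDerivAt (fun θ : ℝ => P.eval (2 + 2 * Real.cos θ))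
      (P.derivative.eval r * (2 * (-Real.sin t))) t := by
    have hinner : HasDerivAt (fun θ : ℝ => 2 + 2 * Real.cos θ) (2 * (-Real.sin t)) t :=
      ((Real.hasDerivAt_cos t).const_mul 2).const_add 2
    exact (P.hasDerivAt r).comp t hinner
  have h2 : HasDerivAt (fun θ : ℝ => 2 * Real.cos ((2 : ℝ) ^ s * θ))
      (2 * (-Real.sin ((2:ℝ) ^ s * t) * 2 ^ s)) t := by
    have : HasDerivAt (fun θ : ℝ => Real.cos ((2 : ℝ) ^ s * θ))
        (-Real.sin ((2:ℝ) ^ s * t) * 2 ^ s) t := by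
      have hlin : HasDerivAt (fun θ : ℝ => (2 : ℝ) ^ s * θ) ((2:ℝ) ^ s) t := by
        simpa using (hasDerivAt_id t).const_mul ((2:ℝ) ^ s)
      exact (Real.hasDerivAt_cos ((2:ℝ) ^ s * t)).comp t hlin
    exact this.const_mul 2
  have hfe : (fun θ : ℝ => P.eval (2 + 2 * Real.cos θ)) =
      fun θ : ℝ => 2 * Real.cos ((2 : ℝ) ^ s * θ) := by
    funext θ; exact hfun θ
  rw [hfe] at h1
  have heq := h1.unique h2
  -- compute sin (2^s * t)
  have h2st : (2:ℝ) ^ s * t = (j : ℝ) * π - π / 2 := by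
    rw [ht]
    field_simp
    ring
  have hsin2 : Real.sin ((2:ℝ) ^ s * t) = (-1) ^ (j + 1) := by
    rw [h2st, Real.sin_nat_mul_pi_sub, Real.sin_pi_div_two, pow_succ]
    ring
  -- sin t ≠ 0
  have hsinpos : 0 < Real.sin t := by
    apply Real.sin_pos_of_pos_of_lt_pi
    · rw [ht]
      apply div_pos
      · apply mul_pos _ Real.pi_pos
        have : (1 : ℝ) ≤ (j : ℝ) := by exact_mod_cast hj1
        linarith
      · positivity
    · rw [ht, div_lt_iff₀ (by positivity)]
      have hjr : (j : ℝ) ≤ 2 ^ s := by exact_mod_cast hj2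
      have : (2 * (j : ℝ) - 1) < 2 ^ (s + 1) := by
        rw [pow_succ]
        linarith
      nlinarith [Real.pi_pos]
  have hsne : Real.sin t ≠ 0 := ne_of_gt hsinpos
  rw [hsin2] at heq
  field_simp
  nlinarith [heq, sq_nonneg (Real.sin t)]
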